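/- (Hopf's lemma for the quadratic Veronese) Let H ⊂ C[X,Y]_d be a linear subspace of binary forms of degree d with dim H = r + 1. Then the linear span of the set of squares {f^2 : f ∈ H} inside C[X,Y]_{2d} has dimension at least 2r + 1. -/

import Mathlib

open Polynomial MvPolynomial Module Submodule

private lemma aux_deg2 (m : Fin 2 →₀ ℕ) : Finsupp.degree m = m 0 + m 1 := by
  rw [Finsupp.degree_apply, Finset.sum_subset (Finset.subset_univ _), Fin.sum_univ_two]
  intro i _ hi
  simpa using Finsupp.notMem_support_iff.mp hi

/-- Dehomogenization (Y := 1) is injective on homogeneous forms. -/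
private lemma aux_phi_inj {d : ℕ} {f : MvPolynomial (Fin 2) ℂ}
    (hf : f ∈ MvPolynomial.homogeneousSubmodule (Fin 2) ℂ d)
    (h0 : MvPolynomial.aeval ![Polynomial.X, (1 : Polynomial ℂ)] f = 0) : f = 0 := by
  rw [MvPolynomial.mem_homogeneousSubmodule] at hf
  have heval : MvPolynomial.aeval ![Polynomial.X, (1 : Polynomial ℂ)] f
      = ∑ m ∈ f.support, Polynomial.C (f.coeff m) * Polynomial.X ^ (m 0) := by
    rw [MvPolynomial.aeval_def, MvPolynomial.eval₂_eq' (algebraMap ℂ (Polynomial ℂ))]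
    refine Finset.sum_congr rfl fun m _ => ?_
    rw [Fin.prod_univ_two]
    simp [Polynomial.algebraMap_eq]
  apply MvPolynomial.ext
  intro m
  rw [MvPolynomial.coeff_zero]
  by_contra hc
  have hm : m ∈ f.support := MvPolynomial.mem_support_iff.mpr hc
  have := congrArg (fun p => Polynomial.coeff p (m 0)) (heval.symm.trans h0)
  simp only [Polynomial.finset_sum_coeff, Polynomial.coeff_C_mul, Polynomial.coeff_X_pow,
    Polynomial.coeff_zero] at this
  rw [Finset.sum_eq_single_of_mem m hm] at this
  · simp at this
    exact hc this
  · intro m' hm' hne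
    have h1 : m' 0 + m' 1 = d := by
      have := hf (MvPolynomial.mem_support_iff.mp hm')
      rw [Pi.one_def, ← Finsupp.degree_eq_weight_one, aux_deg2] at this
      exact this
    have h2 : m 0 + m 1 = d := by
      have := hf hc
      rw [Pi.one_def, ← Finsupp.degree_eq_weight_one, aux_deg2] at this
      exact this
    have hne0 : m 0 ≠ m' 0 := by
      intro he
      apply hne
      have hv0 : m' 0 = m 0 := he.symm
      have hv1 : m' 1 = m 1 := by omega
      ext i
      fin_cases i
      · exact hv0
      · exact hv1
    simp [hne0]

/-- Nonzero polynomials with strictly increasing degrees are linearly independent. -/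
private lemma aux_indep : ∀ {n : ℕ} (p : Fin n → Polynomial ℂ), (∀ i, p i ≠ 0) →
    (∀ i j : Fin n, i < j → (p i).natDegree < (p j).natDegree) → LinearIndependent ℂ p := by
  intro n
  induction n with
  | zero => intro p _ _; exact linearIndependent_empty_type
  | succ n ih =>
    intro p h0 hmono
    rw [← Fin.snoc_init_self p, linearIndependent_fin_snoc]
    constructor
    · exact ih (Fin.init p) (fun i => h0 _)
        (fun i j hij => hmono _ _ (Fin.castSucc_lt_castSucc_iff.mpr hij))
    · intro hmem
      set a := (p (Fin.last n)).natDegree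
      have hle : Submodule.span ℂ (Set.range (Fin.init p)) ≤ Polynomial.degreeLT ℂ a := by
        rw [Submodule.span_le]
        rintro _ ⟨i, rfl⟩
        rw [SetLike.mem_coe, Polynomial.mem_degreeLT]
        exact (Polynomial.natDegree_lt_iff_degree_lt (h0 _)).mp
          (hmono _ _ (Fin.castSucc_lt_last i))
      have := Polynomial.mem_degreeLT.mp (hle hmem)
      exact absurd ((Polynomial.natDegree_lt_iff_degree_lt (h0 _)).mpr this) (lt_irrefl a)

/-- In an `n`-dimensional space of polynomials one finds `n` nonzero elements
with strictly increasing degrees. -/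
private lemma aux_exists : ∀ (n : ℕ) (V : Submodule ℂ (Polynomial ℂ)),
    FiniteDimensional ℂ V → n ≤ Module.finrank ℂ V →
    ∃ p : Fin n → Polynomial ℂ, (∀ i, p i ∈ V) ∧ (∀ i, p i ≠ 0) ∧
      ∀ i j : Fin n, i < j → (p i).natDegree < (p j).natDegree := by
  intro n
  induction n with
  | zero =>
    intro V _ _
    exact ⟨fun i => i.elim0, fun i => i.elim0, fun i => i.elim0, fun i => i.elim0⟩
  | succ n ih =>
    intro V hVfd hle
    -- degrees in V are bounded
    obtain ⟨s, hs⟩ := (Submodule.fg_iff_finiteDimensional V).mpr hVfd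
    have hbdd : ∀ q ∈ V, q.natDegree ≤ s.sup Polynomial.natDegree := by
      have hsub : V ≤ Polynomial.degreeLT ℂ (s.sup Polynomial.natDegree + 1) := by
        rw [← hs, Submodule.span_le]
        intro q hq
        rw [SetLike.mem_coe, Polynomial.mem_degreeLT]
        calc q.degree ≤ (q.natDegree : WithBot ℕ) := Polynomial.degree_le_natDegree
          _ < ((s.sup Polynomial.natDegree + 1 : ℕ) : WithBot ℕ) := by
              exact_mod_cast Nat.lt_succ_of_le (Finset.le_sup hq)
      intro q hq
      have := Polynomial.mem_degreeLT.mp (hsub hq)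
      by_cases hq0 : q = 0
      · simp [hq0]
      · exact Nat.lt_succ_iff.mp ((Polynomial.natDegree_lt_iff_degree_lt hq0).mpr this)
    set A : Set ℕ := {k | ∃ q ∈ V, q ≠ 0 ∧ q.natDegree = k} with hA
    have hAbdd : BddAbove A := ⟨s.sup Polynomial.natDegree,
      by rintro k ⟨q, hq, _, rfl⟩; exact hbdd q hq⟩
    have hVne : V ≠ ⊥ := by
      intro h
      rw [h, finrank_bot] at hle
      omega
    obtain ⟨q₀, hq₀, hq₀0⟩ := Submodule.exists_mem_ne_zero_of_ne_bot hVne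
    have hAne : A.Nonempty := ⟨q₀.natDegree, q₀, hq₀, hq₀0, rfl⟩
    obtain ⟨p, hpV, hp0, hpa⟩ : ∃ q ∈ V, q ≠ 0 ∧ q.natDegree = sSup A := Nat.sSup_mem hAne hAbdd
    set a := sSup A with ha
    have hmax : ∀ q ∈ V, q.natDegree ≤ a := by
      intro q hq
      by_cases hq0 : q = 0
      · simp [hq0]
      · exact le_csSup hAbdd ⟨q, hq, hq0, rfl⟩
    set W := V ⊓ Polynomial.degreeLT ℂ a with hW
    haveI : FiniteDimensional ℂ (Polynomial.degreeLT ℂ a) :=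
      LinearEquiv.finiteDimensional (Polynomial.degreeLTEquiv ℂ a).symm
    haveI hWfd : FiniteDimensional ℂ W := Submodule.finiteDimensional_of_le inf_le_right
    have hpca : p.coeff a ≠ 0 := by
      rw [← hpa]; exact Polynomial.leadingCoeff_ne_zero.mpr hp0
    have hsup : V ≤ W ⊔ (ℂ ∙ p) := by
      intro q hq
      have hWmem : q - (q.coeff a / p.coeff a) • p ∈ W := by
        refine Submodule.mem_inf.mpr ⟨Submodule.sub_mem V hq (Submodule.smul_mem V _ hpV), ?_⟩
        rw [Polynomial.mem_degreeLT, Polynomial.degree_lt_iff_coeff_zero]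
        intro m hm
        rcases eq_or_lt_of_le hm with hm' | hm'
        · simp only [Polynomial.coeff_sub, Polynomial.coeff_smul, smul_eq_mul, ← hm']
          field_simp
          simp
        · have h1 : q.coeff m = 0 :=
            Polynomial.coeff_eq_zero_of_natDegree_lt (lt_of_le_of_lt (hmax q hq) hm')
          have h2 : p.coeff m = 0 :=
            Polynomial.coeff_eq_zero_of_natDegree_lt (lt_of_le_of_lt (hmax p hpV) hm')
          simp [h1, h2]
      have : q = (q - (q.coeff a / p.coeff a) • p) + (q.coeff a / p.coeff a) • p := by ring
      rw [this]
      exact Submodule.add_mem _ (Submodule.mem_sup_left hWmem)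
        (Submodule.mem_sup_right (Submodule.smul_mem _ _ (Submodule.mem_span_singleton_self p)))
    have hrankW : n ≤ Module.finrank ℂ W := by
      haveI : FiniteDimensional ℂ (ℂ ∙ p) := inferInstance
      have h1 : Module.finrank ℂ V ≤ Module.finrank ℂ ↥(W ⊔ (ℂ ∙ p)) :=
        Submodule.finrank_mono hsup
      have h2 := Submodule.finrank_sup_add_finrank_inf_eq W (ℂ ∙ p)
      have h3 : Module.finrank ℂ ↥(ℂ ∙ p) = 1 := finrank_span_singleton hp0
      omega
    obtain ⟨g, hgW, hg0, hgmono⟩ := ih W hWfd hrankW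
    have hglt : ∀ i, (g i).natDegree < a := fun i =>
      (Polynomial.natDegree_lt_iff_degree_lt (hg0 i)).mpr
        (Polynomial.mem_degreeLT.mp (Submodule.mem_inf.mp (hgW i)).2)
    refine ⟨Fin.snoc g p, ?_, ?_, ?_⟩
    · intro i
      refine Fin.lastCases ?_ (fun j => ?_) i
      · rw [Fin.snoc_last]; exact hpV
      · rw [Fin.snoc_castSucc]; exact (Submodule.mem_inf.mp (hgW j)).1
    · intro i
      refine Fin.lastCases ?_ (fun j => ?_) i
      · rw [Fin.snoc_last]; exact hp0
      · rw [Fin.snoc_castSucc]; exact hg0 j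
    · intro i j hij
      revert hij
      refine Fin.lastCases ?_ (fun j' => ?_) j
      · intro hij
        obtain ⟨i', rfl⟩ := Fin.exists_castSucc_eq.mpr (Fin.ne_last_of_lt hij)
        rw [Fin.snoc_last, Fin.snoc_castSucc, hpa]
        exact hglt i'
      · intro hij
        obtain ⟨i', rfl⟩ := Fin.exists_castSucc_eq.mpr
          (Fin.ne_last_of_lt (lt_of_lt_of_le hij (Fin.le_last _)))
        rw [Fin.snoc_castSucc, Fin.snoc_castSucc]
        exact hgmono _ _ (Fin.castSucc_lt_castSucc_iff.mp hij)

/-- (Hopf's lemma for the quadratic Veronese.)  If `H` is an `(r+1)`-dimensional linear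
subspace of the binary forms of degree `d`, then the linear span of the squares
`{f² : f ∈ H}` inside the binary forms of degree `2d` has dimension at least `2r + 1`. -/
theorem stmt_9 (d r : ℕ) (H : Submodule ℂ (MvPolynomial (Fin 2) ℂ))
    (hH : H ≤ MvPolynomial.homogeneousSubmodule (Fin 2) ℂ d)
    (hdim : Module.finrank ℂ H = r + 1) :
    2 * r + 1 ≤
      Module.finrank ℂ (Submodule.span ℂ ((fun f => f ^ 2) '' (H : Set (MvPolynomial (Fin 2) ℂ)))) := by
  classical
  set φ : MvPolynomial (Fin 2) ℂ →ₐ[ℂ] Polynomial ℂ :=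
    MvPolynomial.aeval ![Polynomial.X, (1 : Polynomial ℂ)] with hφ
  set L : MvPolynomial (Fin 2) ℂ →ₗ[ℂ] Polynomial ℂ := φ.toLinearMap with hL
  set S : Set (MvPolynomial (Fin 2) ℂ) := (fun f => f ^ 2) '' (H : Set (MvPolynomial (Fin 2) ℂ))
    with hS
  -- finite dimensionality
  have htd : ∀ f ∈ H, MvPolynomial.totalDegree f ≤ d := fun f hf =>
    ((MvPolynomial.mem_homogeneousSubmodule _ _).mp (hH hf)).totalDegree_le
  haveI hHfd : FiniteDimensional ℂ H := Submodule.finiteDimensional_of_le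
    (le_trans hH (fun f hf => (MvPolynomial.mem_restrictTotalDegree _ _ _).mpr
      (((MvPolynomial.mem_homogeneousSubmodule _ _).mp hf).totalDegree_le)))
  haveI hSfd : FiniteDimensional ℂ (Submodule.span ℂ S) := by
    refine Submodule.finiteDimensional_of_le (S₂ := MvPolynomial.restrictTotalDegree (Fin 2) ℂ (2 * d))
      (Submodule.span_le.mpr ?_)
    rintro _ ⟨f, hf, rfl⟩
    rw [SetLike.mem_coe, MvPolynomial.mem_restrictTotalDegree]
    calc (f ^ 2).totalDegree = (f * f).totalDegree := by ring_nf
      _ ≤ f.totalDegree + f.totalDegree := MvPolynomial.totalDegree_mul f f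
      _ ≤ 2 * d := by have := htd f hf; omega
  -- the image subspace
  set V := Submodule.map L H with hV
  haveI hVfd : FiniteDimensional ℂ V := inferInstance
  have hψinj : Function.Injective (L.domRestrict H) := by
    rw [← LinearMap.ker_eq_bot, eq_bot_iff]
    rintro ⟨x, hx⟩ hker
    have : φ x = 0 := hker
    exact (Submodule.mem_bot ℂ).mpr (Subtype.ext (aux_phi_inj (hH hx) this))
  have hrV : r + 1 ≤ Module.finrank ℂ V := by
    have h1 := LinearMap.finrank_range_of_inj hψinj
    rw [LinearMap.range_domRestrict] at h1
    rw [← hV] at h1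
    rw [h1, hdim]
  obtain ⟨g, hgV, hg0, hgmono⟩ := aux_exists (r + 1) V hVfd hrV
  -- preimages
  have hpre : ∀ i, ∃ u ∈ H, φ u = g i := by
    intro i
    rcases Submodule.mem_map.mp (hgV i) with ⟨u, hu, hu'⟩
    exact ⟨u, hu, hu'⟩
  choose u hu hφu using hpre
  -- products of elements of φ(H) lie in span (φ '' S)
  have key : ∀ x y : MvPolynomial (Fin 2) ℂ, x ∈ H → y ∈ H →
      φ x * φ y ∈ Submodule.span ℂ (⇑φ '' S) := by
    intro x y hx hy
    have h1 : φ ((x + y) ^ 2) ∈ ⇑φ '' S := ⟨(x + y) ^ 2, ⟨x + y, Submodule.add_mem H hx hy, rfl⟩, rfl⟩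
    have h2 : φ (x ^ 2) ∈ ⇑φ '' S := ⟨x ^ 2, ⟨x, hx, rfl⟩, rfl⟩
    have h3 : φ (y ^ 2) ∈ ⇑φ '' S := ⟨y ^ 2, ⟨y, hy, rfl⟩, rfl⟩
    have hiden : φ x * φ y = (2⁻¹ : ℂ) • (φ ((x + y) ^ 2) - φ (x ^ 2) - φ (y ^ 2)) := by
      have h2ab : φ ((x + y) ^ 2) - φ (x ^ 2) - φ (y ^ 2) = (2 : ℂ) • (φ x * φ y) := by
        rw [Algebra.smul_def, map_ofNat, map_pow, map_pow, map_pow, map_add]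
        ring
      rw [h2ab, smul_smul]
      norm_num
    rw [hiden]
    exact Submodule.smul_mem _ _ (Submodule.sub_mem _
      (Submodule.sub_mem _ (Submodule.subset_span h1) (Submodule.subset_span h2))
      (Submodule.subset_span h3))
  -- the 2r+1 products
  set a : Fin (r + 1) → ℕ := fun i => (g i).natDegree with haf
  have hale : ∀ i j : Fin (r + 1), i ≤ j → a i ≤ a j := by
    intro i j hij
    rcases eq_or_lt_of_le hij with h | h
    · rw [h]
    · exact le_of_lt (hgmono i j h)
  set F : Fin (2 * r + 1) → Polynomial ℂ := fun k =>
    if h : (k : ℕ) < r + 1 then g ⟨0, Nat.succ_pos r⟩ * g ⟨(k : ℕ), h⟩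
    else g ⟨(k : ℕ) - r, by omega⟩ * g ⟨r, Nat.lt_succ_self r⟩ with hF
  have hF0 : ∀ k, F k ≠ 0 := by
    intro k
    rw [hF]
    dsimp only
    split <;> exact mul_ne_zero (hg0 _) (hg0 _)
  have hFdeg : ∀ k : Fin (2 * r + 1), (F k).natDegree =
      if h : (k : ℕ) < r + 1 then a ⟨0, Nat.succ_pos r⟩ + a ⟨(k : ℕ), h⟩
      else a ⟨(k : ℕ) - r, by omega⟩ + a ⟨r, Nat.lt_succ_self r⟩ := by
    intro k
    rw [hF]
    dsimp only
    split <;> exact Polynomial.natDegree_mul (hg0 _) (hg0 _)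
  have hFmono : ∀ i j : Fin (2 * r + 1), i < j → (F i).natDegree < (F j).natDegree := by
    intro i j hij
    have hij' : (i : ℕ) < (j : ℕ) := hij
    rw [hFdeg, hFdeg]
    by_cases hi : (i : ℕ) < r + 1 <;> by_cases hj : (j : ℕ) < r + 1
    · rw [dif_pos hi, dif_pos hj]
      exact Nat.add_lt_add_left (hgmono _ _ (by exact hij')) _
    · rw [dif_pos hi, dif_neg hj]
      have h1 : a ⟨(i : ℕ), hi⟩ ≤ a ⟨r, Nat.lt_succ_self r⟩ :=
        hale _ _ (by simp [Fin.le_def]; omega)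
      have h2 : a ⟨0, Nat.succ_pos r⟩ < a ⟨(j : ℕ) - r, by omega⟩ :=
        hgmono _ _ (by simp [Fin.lt_def]; omega)
      omega
    · omega
    · rw [dif_neg hi, dif_neg hj]
      exact Nat.add_lt_add_right (hgmono _ _ (by simp [Fin.lt_def]; omega)) _
  have hFindep := aux_indep F hF0 hFmono
  have hFspan : Set.range F ⊆ (Submodule.span ℂ (⇑φ '' S) : Set (Polynomial ℂ)) := by
    rintro _ ⟨k, rfl⟩
    rw [hF]
    dsimp only
    split
    · rw [← hφu, ← hφu]; exact key _ _ (hu _) (hu _)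
    · rw [← hφu, ← hφu]; exact key _ _ (hu _) (hu _)
  -- dimension count
  have hmap : Submodule.span ℂ (⇑φ '' S) = Submodule.map L (Submodule.span ℂ S) := by
    rw [Submodule.map_span]
    rfl
  haveI : FiniteDimensional ℂ (Submodule.span ℂ (⇑φ '' S)) := by
    rw [hmap]; infer_instance
  have h1 : Module.finrank ℂ (Submodule.span ℂ (Set.range F)) = 2 * r + 1 := by
    rw [finrank_span_eq_card hFindep, Fintype.card_fin]
  have h2 : Module.finrank ℂ (Submodule.span ℂ (Set.range F)) ≤
      Module.finrank ℂ (Submodule.span ℂ (⇑φ '' S)) :=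
    Submodule.finrank_mono (Submodule.span_le.mpr hFspan)
  have h3 : Module.finrank ℂ (Submodule.span ℂ (⇑φ '' S)) ≤
      Module.finrank ℂ (Submodule.span ℂ S) := by
    rw [hmap]
    exact Submodule.finrank_map_le L (Submodule.span ℂ S)
  omega
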